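/- Let S be the 3×3 matrix with rows (0, 0, ν-1), (ν, 1, 0), (0, 0, -1) for 0 < ν < 1, and τ = log 2. Then exp(τS) has rows (1, 0, -(1-ν)/2), (ν, 2, -ν(1-ν)/4), (0, 0, 1/2), and exp(-τSᵀ) has rows (1, -ν/2, 0), (0, 1/2, 0), (1-ν, -ν(1-ν)/4, 2). In particular (exp(τS))₂₁ = ν and (exp(-τSᵀ))₃₁ = 1 - ν. -/

import Mathlib

open NormedSpace Matrix

lemma exp_diag_conj3 (B Bi : Matrix (Fin 3) (Fin 3) ℝ) (h1 : B * Bi = 1) (h2 : Bi * B = 1)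
    (d : Fin 3 → ℝ) :
    exp (B * Matrix.diagonal d * Bi)
      = B * Matrix.diagonal (fun i => Real.exp (d i)) * Bi := by
  have hexp : exp d = fun i => Real.exp (d i) := by
    funext i
    rw [Pi.coe_exp, Real.exp_eq_exp_ℝ]
  have := Matrix.exp_units_conj (⟨B, Bi, h1, h2⟩ : (Matrix (Fin 3) (Fin 3) ℝ)ˣ)
    (Matrix.diagonal d)
  simpa [Matrix.exp_diagonal, hexp] using this

lemma diag3 (a b c : ℝ) :
    Matrix.diagonal ![a, b, c] = !![a, 0, 0; 0, b, 0; 0, 0, c] := by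
  ext i j
  fin_cases i <;> fin_cases j <;> simp [Matrix.diagonal, Matrix.vecHead, Matrix.vecTail]

theorem stmt_11 (ν : ℝ) (hν0 : 0 < ν) (hν1 : ν < 1)
    (τ : ℝ) (hτ : τ = Real.log 2)
    (S : Matrix (Fin 3) (Fin 3) ℝ)
    (hS : S = !![0, 0, ν - 1; ν, 1, 0; 0, 0, -1]) :
    exp (τ • S) =
      !![1, 0, -(1 - ν) / 2; ν, 2, -(ν * (1 - ν)) / 4; 0, 0, 1 / 2] ∧
    exp ((-τ) • Sᵀ) =
      !![1, -ν / 2, 0; 0, 1 / 2, 0; 1 - ν, -(ν * (1 - ν)) / 4, 2] ∧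
    exp (τ • S) 1 0 = ν ∧ exp ((-τ) • Sᵀ) 2 0 = 1 - ν := by
  have he1 : Real.exp τ = 2 := by rw [hτ]; exact Real.exp_log (by norm_num)
  have he2 : Real.exp (-τ) = 1 / 2 := by
    rw [Real.exp_neg, he1]; norm_num
  -- first exponential
  set P : Matrix (Fin 3) (Fin 3) ℝ :=
    !![1, 0, 1 - ν; -ν, 1, -(ν * (1 - ν)) / 2; 0, 0, 1] with hP
  set Pi : Matrix (Fin 3) (Fin 3) ℝ :=
    !![1, 0, -(1 - ν); ν, 1, -(ν * (1 - ν)) / 2; 0, 0, 1] with hPi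
  have h1 : P * Pi = 1 := by
    rw [hP, hPi, Matrix.mul_fin_three]
    ext i j
    fin_cases i <;> fin_cases j <;> simp [Matrix.one_apply, Matrix.vecHead, Matrix.vecTail] <;> ring
  have h2 : Pi * P = 1 := by
    rw [hP, hPi, Matrix.mul_fin_three]
    ext i j
    fin_cases i <;> fin_cases j <;> simp [Matrix.one_apply, Matrix.vecHead, Matrix.vecTail] <;> ring
  have hA : τ • S = P * Matrix.diagonal ![0, τ, -τ] * Pi := by
    rw [hP, hPi, hS, diag3, Matrix.mul_fin_three, Matrix.mul_fin_three]
    ext i j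
    fin_cases i <;> fin_cases j <;> simp [Matrix.vecHead, Matrix.vecTail] <;> ring
  have hE1 : exp (τ • S) =
      !![1, 0, -(1 - ν) / 2; ν, 2, -(ν * (1 - ν)) / 4; 0, 0, 1 / 2] := by
    rw [hA, exp_diag_conj3 P Pi h1 h2]
    have hd : (fun i => Real.exp (![0, τ, -τ] i)) = ![1, 2, 1/2] := by
      funext i
      fin_cases i <;> simp [he1, he2]
    rw [hd, hP, hPi, diag3, Matrix.mul_fin_three, Matrix.mul_fin_three]
    ext i j
    fin_cases i <;> fin_cases j <;> simp [Matrix.vecHead, Matrix.vecTail] <;> ring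
  -- second exponential
  set Q : Matrix (Fin 3) (Fin 3) ℝ :=
    !![1, ν, 0; 0, 1, 0; -(1 - ν), -(ν * (1 - ν)) / 2, 1] with hQ
  set Qi : Matrix (Fin 3) (Fin 3) ℝ :=
    !![1, -ν, 0; 0, 1, 0; 1 - ν, -(ν * (1 - ν)) / 2, 1] with hQi
  have g1 : Q * Qi = 1 := by
    rw [hQ, hQi, Matrix.mul_fin_three]
    ext i j
    fin_cases i <;> fin_cases j <;> simp [Matrix.one_apply, Matrix.vecHead, Matrix.vecTail] <;> ring
  have g2 : Qi * Q = 1 := by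
    rw [hQ, hQi, Matrix.mul_fin_three]
    ext i j
    fin_cases i <;> fin_cases j <;> simp [Matrix.one_apply, Matrix.vecHead, Matrix.vecTail] <;> ring
  have hB : (-τ) • Sᵀ = Q * Matrix.diagonal ![0, -τ, τ] * Qi := by
    rw [hQ, hQi, hS, diag3, Matrix.mul_fin_three, Matrix.mul_fin_three]
    ext i j
    fin_cases i <;> fin_cases j <;> simp [Matrix.transpose_apply, Matrix.vecHead, Matrix.vecTail] <;> ring
  have hE2 : exp ((-τ) • Sᵀ) =
      !![1, -ν / 2, 0; 0, 1 / 2, 0; 1 - ν, -(ν * (1 - ν)) / 4, 2] := by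
    rw [hB, exp_diag_conj3 Q Qi g1 g2]
    have hd : (fun i => Real.exp (![0, -τ, τ] i)) = ![1, 1/2, 2] := by
      funext i
      fin_cases i <;> simp [he1, he2]
    rw [hd, hQ, hQi, diag3, Matrix.mul_fin_three, Matrix.mul_fin_three]
    ext i j
    fin_cases i <;> fin_cases j <;> simp [Matrix.vecHead, Matrix.vecTail] <;> ring
  refine ⟨hE1, hE2, ?_, ?_⟩
  · rw [hE1]; simp
  · rw [hE2]; simp
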